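/- Let ρ : ℂⁿ → ℝ be twice continuously differentiable (over ℝ) near a point z with ρ(z) < 0, and let u := −log(−ρ) on the neighborhood of z where ρ < 0. Then for every w ∈ ℂⁿ: (−ρ(z))·L_u(z)(w,w̄) = L_ρ(z)(w,w̄) − (1/ρ(z))·|∑_{j=1}^n (∂ρ/∂z_j)(z)·w_j|². Consequently, if u is plurisubharmonic near z (i.e. L_u(z')(w,w̄) ≥ 0 for all z' near z and all w), then ∑_{j,k=1}^n (∂²ρ/∂z_j∂z̄_k(z) − (1/ρ(z))·∂ρ/∂z_j(z)·∂ρ/∂z̄_k(z))·w_j·conj(w_k) ≥ 0 for all w ∈ ℂⁿ. -/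

import Mathlib

/-!
STATEMENT 10 (derivation of inequality (6) of the paper): for ρ : ℂⁿ → ℝ twice continuously
differentiable near z with ρ(z) < 0 and u := −log(−ρ), for every w ∈ ℂⁿ:
(−ρ(z))·L_u(z)(w,w̄) = L_ρ(z)(w,w̄) − (1/ρ(z))·|∑ⱼ (∂ρ/∂zⱼ)(z)·wⱼ|².  Consequently, if u is
plurisubharmonic near z, then the form Q_ρ(z)(w,w̄) =
∑ⱼₖ (∂²ρ/∂zⱼ∂z̄ₖ(z) − (1/ρ(z))·∂ρ/∂zⱼ(z)·∂ρ/∂z̄ₖ(z))·wⱼ·conj(wₖ) is ≥ 0.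
-/

open Complex Finset

noncomputable section

/-- The `j`-th standard basis vector of `ℂⁿ`. -/
def sb (n : ℕ) (j : Fin n) : EuclideanSpace ℂ (Fin n) := EuclideanSpace.single j 1

/-- Wirtinger derivative `∂ρ/∂z_j` of a real-valued function (real Fréchet derivative). -/
def wdz {n : ℕ} (ρ : EuclideanSpace ℂ (Fin n) → ℝ) (z : EuclideanSpace ℂ (Fin n))
    (j : Fin n) : ℂ :=
  (1 / 2 : ℂ) * ((fderiv ℝ ρ z (sb n j) : ℂ) -
    Complex.I * (fderiv ℝ ρ z ((Complex.I : ℂ) • sb n j) : ℂ))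

/-- Wirtinger derivative `∂ρ/∂z̄_j` of a real-valued function. -/
def wdzbar {n : ℕ} (ρ : EuclideanSpace ℂ (Fin n) → ℝ) (z : EuclideanSpace ℂ (Fin n))
    (j : Fin n) : ℂ :=
  (1 / 2 : ℂ) * ((fderiv ℝ ρ z (sb n j) : ℂ) +
    Complex.I * (fderiv ℝ ρ z ((Complex.I : ℂ) • sb n j) : ℂ))

/-- Real second Fréchet derivative `D²ρ(z)(v,w)`. -/
def D2 {n : ℕ} (ρ : EuclideanSpace ℂ (Fin n) → ℝ)
    (z v w : EuclideanSpace ℂ (Fin n)) : ℝ :=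
  fderiv ℝ (fun y => fderiv ℝ ρ y v) z w

/-- The mixed complex second derivative `∂²ρ/∂z_j∂z̄_k(z)`. -/
def dzdzbar {n : ℕ} (ρ : EuclideanSpace ℂ (Fin n) → ℝ) (z : EuclideanSpace ℂ (Fin n))
    (j k : Fin n) : ℂ :=
  (1 / 4 : ℂ) * ((D2 ρ z (sb n j) (sb n k) : ℂ)
    + (D2 ρ z ((Complex.I : ℂ) • sb n j) ((Complex.I : ℂ) • sb n k) : ℂ)
    + Complex.I * ((D2 ρ z (sb n j) ((Complex.I : ℂ) • sb n k) : ℂ)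
      - (D2 ρ z ((Complex.I : ℂ) • sb n j) (sb n k) : ℂ)))

/-- The Levi form `L_ρ(z)(u, w̄) = ∑_{j,k} ∂²ρ/∂z_j∂z̄_k(z)·u_j·conj(w_k)`. -/
def Levi {n : ℕ} (ρ : EuclideanSpace ℂ (Fin n) → ℝ) (z : EuclideanSpace ℂ (Fin n))
    (u w : Fin n → ℂ) : ℂ :=
  ∑ j, ∑ k, dzdzbar ρ z j k * u j * (starRingEnd ℂ) (w k)

theorem levi_of_neg_log_neg {n : ℕ}
    (ρ : EuclideanSpace ℂ (Fin n) → ℝ) (z : EuclideanSpace ℂ (Fin n))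
    (hρ : ContDiffAt ℝ 2 ρ z) (hneg : ρ z < 0)
    (u : EuclideanSpace ℂ (Fin n) → ℝ)
    (hu : u = fun z' => -Real.log (-(ρ z'))) :
    (∀ w : Fin n → ℂ,
      ((-(ρ z) : ℝ) : ℂ) * Levi u z w w
        = Levi ρ z w w
          - (1 / (ρ z : ℂ)) * (‖∑ j, wdz ρ z j * w j‖ : ℂ) ^ 2) ∧
    ((∀ᶠ z' in nhds z, ∀ w : Fin n → ℂ, 0 ≤ (Levi u z' w w).re) →
      ∀ w : Fin n → ℂ,
        0 ≤ (∑ j, ∑ k, (dzdzbar ρ z j k - (1 / (ρ z : ℂ)) * wdz ρ z j * wdzbar ρ z k)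
              * w j * (starRingEnd ℂ) (w k)).re ∧
        (∑ j, ∑ k, (dzdzbar ρ z j k - (1 / (ρ z : ℂ)) * wdz ρ z j * wdzbar ρ z k)
              * w j * (starRingEnd ℂ) (w k)).im = 0) := by
  subst hu
  have hrne : ρ z ≠ 0 := ne_of_lt hneg
  have hrC : (ρ z : ℂ) ≠ 0 := Complex.ofReal_ne_zero.mpr hrne
  have h1 : ∀ᶠ y in nhds z, ContDiffAt ℝ 2 ρ y := hρ.eventually (by simp)
  have h2 : ∀ᶠ y in nhds z, ρ y < 0 := hρ.continuousAt.eventually (gt_mem_nhds hneg)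
  have hρd : DifferentiableAt ℝ ρ z := hρ.differentiableAt (by norm_num)
  have hφ : DifferentiableAt ℝ (fderiv ℝ ρ) z :=
    (hρ.fderiv_right (m := 1) (by norm_num)).differentiableAt one_ne_zero
  -- first derivative of u near z
  have hfd : ∀ᶠ y in nhds z,
      fderiv ℝ (fun z' => -Real.log (-ρ z')) y = (-(ρ y)⁻¹) • fderiv ℝ ρ y := by
    filter_upwards [h1, h2] with y hy hyneg
    have hd : DifferentiableAt ℝ ρ y := hy.differentiableAt (by norm_num)
    have hlog : HasDerivAt Real.log (-(ρ y))⁻¹ (-(ρ y)) := Real.hasDerivAt_log (by linarith)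
    have hcomp := (hlog.comp_hasFDerivAt y hd.hasFDerivAt.neg).neg
    have hh : HasFDerivAt (fun z' => -Real.log (-ρ z')) ((-(ρ y)⁻¹) • fderiv ℝ ρ y) y := by
      exact hcomp.congr_fderiv (by rw [smul_neg, neg_neg, inv_neg])
    exact hh.fderiv
  -- second derivative of u at z
  have hD2 : ∀ v w, D2 (fun z' => -Real.log (-ρ z')) z v w
      = -(ρ z)⁻¹ * D2 ρ z v w + ((ρ z)^2)⁻¹ * (fderiv ℝ ρ z v) * (fderiv ℝ ρ z w) := by
    intro v w
    have heq : (fun y => fderiv ℝ (fun z' => -Real.log (-ρ z')) y v)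
        =ᶠ[nhds z] (fun y => -(ρ y)⁻¹ * fderiv ℝ ρ y v) := by
      filter_upwards [hfd] with y hy
      rw [hy]; rfl
    have hdv : DifferentiableAt ℝ (fun y => fderiv ℝ ρ y v) z :=
      hφ.clm_apply (differentiableAt_const v)
    have hc : HasFDerivAt (fun y => -(ρ y)⁻¹) (((ρ z)^2)⁻¹ • fderiv ℝ ρ z) z := by
      have h := ((hasDerivAt_inv hrne).comp_hasFDerivAt z hρd.hasFDerivAt).neg
      exact h.congr_fderiv (by rw [neg_smul, neg_neg])
    have hprod : HasFDerivAt (fun y => -(ρ y)⁻¹ * fderiv ℝ ρ y v) _ z := hc.mul hdv.hasFDerivAt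
    show fderiv ℝ (fun y => fderiv ℝ (fun z' => -Real.log (-ρ z')) y v) z w = _
    rw [heq.fderiv_eq, hprod.fderiv]
    simp only [ContinuousLinearMap.add_apply, ContinuousLinearMap.smul_apply, smul_eq_mul]
    show _ = -(ρ z)⁻¹ * fderiv ℝ (fun y => fderiv ℝ ρ y v) z w + _
    ring
  -- Wirtinger second derivatives of u at z
  have hdz : ∀ j k, dzdzbar (fun z' => -Real.log (-ρ z')) z j k
      = -((ρ z : ℂ))⁻¹ * dzdzbar ρ z j k + (((ρ z : ℂ))^2)⁻¹ * (wdz ρ z j * wdzbar ρ z k) := by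
    intro j k
    simp only [dzdzbar, hD2, wdz, wdzbar]
    push_cast
    field_simp
    ring_nf
    simp only [Complex.I_sq]
    ring
  have hconj : ∀ k, wdzbar ρ z k = (starRingEnd ℂ) (wdz ρ z k) := by
    intro k
    simp only [wdz, wdzbar, map_mul, map_sub, map_one, map_div₀, map_ofNat,
      Complex.conj_ofReal, Complex.conj_I]
    ring
  have hSS : ∀ w : Fin n → ℂ,
      ((∑ j, wdz ρ z j * w j) * (∑ k, (starRingEnd ℂ) (wdz ρ z k * w k)))
        = ((‖∑ j, wdz ρ z j * w j‖ : ℂ))^2 := by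
    intro w
    rw [← map_sum, Complex.mul_conj, Complex.normSq_eq_norm_sq]
    push_cast
    ring
  -- Levi form of u at z
  have hLu : ∀ w : Fin n → ℂ,
      Levi (fun z' => -Real.log (-ρ z')) z w w
        = -((ρ z : ℂ))⁻¹ * Levi ρ z w w
          + (((ρ z : ℂ))^2)⁻¹ * ((‖∑ j, wdz ρ z j * w j‖ : ℂ))^2 := by
    intro w
    have e1 : Levi (fun z' => -Real.log (-ρ z')) z w w
        = ∑ j, ∑ k, (-((ρ z : ℂ))⁻¹ * (dzdzbar ρ z j k * w j * (starRingEnd ℂ) (w k))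
            + (((ρ z : ℂ))^2)⁻¹ * ((wdz ρ z j * w j) * (starRingEnd ℂ) (wdz ρ z k * w k))) := by
      simp only [Levi]
      refine Finset.sum_congr rfl fun j _ => Finset.sum_congr rfl fun k _ => ?_
      rw [hdz j k, map_mul, ← hconj k]
      ring
    rw [e1]
    simp only [Finset.sum_add_distrib, ← Finset.mul_sum]
    simp only [← Finset.sum_mul]
    rw [hSS w, Levi]
  -- Part 1
  have part1 : ∀ w : Fin n → ℂ,
      ((-(ρ z) : ℝ) : ℂ) * Levi (fun z' => -Real.log (-ρ z')) z w w
        = Levi ρ z w w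
          - (1 / (ρ z : ℂ)) * (‖∑ j, wdz ρ z j * w j‖ : ℂ) ^ 2 := by
    intro w
    rw [hLu w]
    push_cast
    field_simp
    ring
  refine ⟨part1, ?_⟩
  -- Part 2
  intro hpsh w
  have hsym := hρ.isSymmSndFDerivAt (by simp [minSmoothness_of_isRCLikeNormedField])
  have hD2e : ∀ v w', D2 ρ z v w' = fderiv ℝ (fderiv ℝ ρ) z w' v := by
    intro v w'
    show fderiv ℝ (fun y => fderiv ℝ ρ y v) z w' = _
    rw [fderiv_clm_apply hφ (differentiableAt_const v)]
    simp
  have hsymm : ∀ v w', D2 ρ z v w' = D2 ρ z w' v := by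
    intro v w'
    rw [hD2e, hD2e]
    exact hsym w' v
  have hLρ : (starRingEnd ℂ) (Levi ρ z w w) = Levi ρ z w w := by
    simp only [Levi, map_sum, map_mul]
    rw [Finset.sum_comm]
    refine Finset.sum_congr rfl fun k _ => Finset.sum_congr rfl fun j _ => ?_
    have hc : (starRingEnd ℂ) (dzdzbar ρ z j k) = dzdzbar ρ z k j := by
      simp only [dzdzbar, map_mul, map_add, map_sub, map_one, map_div₀, map_ofNat,
        Complex.conj_ofReal, Complex.conj_I]
      rw [hsymm (sb n j) (sb n k), hsymm ((Complex.I : ℂ) • sb n j) ((Complex.I : ℂ) • sb n k),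
        hsymm (sb n j) ((Complex.I : ℂ) • sb n k), hsymm ((Complex.I : ℂ) • sb n j) (sb n k)]
      ring
    rw [hc, Complex.conj_conj]
    ring
  have hLρim : (Levi ρ z w w).im = 0 := Complex.conj_eq_iff_im.mp hLρ
  have hQ : (∑ j, ∑ k, (dzdzbar ρ z j k - (1 / (ρ z : ℂ)) * wdz ρ z j * wdzbar ρ z k)
        * w j * (starRingEnd ℂ) (w k))
      = Levi ρ z w w - (1 / (ρ z : ℂ)) * (‖∑ j, wdz ρ z j * w j‖ : ℂ) ^ 2 := by
    have e1 : ∀ j k, (dzdzbar ρ z j k - (1 / (ρ z : ℂ)) * wdz ρ z j * wdzbar ρ z k)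
          * w j * (starRingEnd ℂ) (w k)
        = dzdzbar ρ z j k * w j * (starRingEnd ℂ) (w k)
          - (1 / (ρ z : ℂ)) * ((wdz ρ z j * w j) * (starRingEnd ℂ) (wdz ρ z k * w k)) := by
      intro j k
      rw [map_mul, ← hconj k]
      ring
    simp only [e1, Finset.sum_sub_distrib, ← Finset.mul_sum]
    simp only [← Finset.sum_mul]
    rw [hSS w, Levi]
  constructor
  · rw [hQ, ← part1 w]
    have h0 : 0 ≤ (Levi (fun z' => -Real.log (-ρ z')) z w w).re := hpsh.self_of_nhds w
    rw [Complex.mul_re]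
    simp only [Complex.ofReal_re, Complex.ofReal_im, zero_mul, sub_zero]
    have : 0 ≤ -ρ z := by linarith
    exact mul_nonneg this h0
  · rw [hQ]
    have e : (1 / (ρ z : ℂ)) * (‖∑ j, wdz ρ z j * w j‖ : ℂ) ^ 2
        = (((1 / ρ z) * ‖∑ j, wdz ρ z j * w j‖ ^ 2 : ℝ) : ℂ) := by
      push_cast
      ring
    rw [e, Complex.sub_im, hLρim, Complex.ofReal_im, sub_zero]

end
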